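/- Let θ be a real-valued arithmetic function with θ(1) ≥ 2 and θ(n) ≥ n, let χ be the characteristic function of the set B_θ. Then for every complex s with Re(s) > 1, one has 1 = ∑_{n≥1} χ(n) n^{-s} ∏_{p ≤ θ(n)} (1 − p^{-s}), where the product runs over primes p. -/

import Mathlib

open scoped Classical

/-- Membership in the set `B_θ`. -/
def InB (θ : ℕ → ℝ) (n : ℕ) : Prop :=
  0 < n ∧ ∀ p ∈ n.primeFactors,
    (p : ℝ) ≤ θ (∏ q ∈ n.primeFactors.filter (· < p), q ^ n.factorization q)

/-- The finite set of primes `p ≤ x`. -/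
noncomputable def primesLe (x : ℝ) : Finset ℕ :=
  (Finset.range (⌊x⌋₊ + 1)).filter fun p => p.Prime ∧ (p : ℝ) ≤ x

noncomputable def pref (n p : ℕ) : ℕ :=
  ∏ q ∈ n.primeFactors.filter (· < p), q ^ n.factorization q

lemma inB_iff (θ : ℕ → ℝ) (n : ℕ) :
    InB θ n ↔ 0 < n ∧ ∀ p ∈ n.primeFactors, (p : ℝ) ≤ θ (pref n p) := Iff.rfl

lemma mem_primesLe {x : ℝ} {p : ℕ} : p ∈ primesLe x ↔ p.Prime ∧ (p : ℝ) ≤ x := by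
  unfold primesLe
  simp only [Finset.mem_filter, Finset.mem_range, Nat.lt_succ_iff]
  exact ⟨fun h => h.2, fun h => ⟨Nat.le_floor h.2, h⟩⟩

lemma pref_mul_prime {n q : ℕ} (hq : q.Prime) (hn : n ≠ 0) {p : ℕ} (hpq : p ≤ q) :
    pref (n * q) p = pref n p := by
  have hpf : (n * q).primeFactors = insert q n.primeFactors := by
    rw [Nat.primeFactors_mul hn hq.ne_zero, hq.primeFactors, Finset.union_comm,
      ← Finset.insert_eq]
  unfold pref
  rw [hpf, Finset.filter_insert, if_neg (by omega)]
  refine Finset.prod_congr rfl fun r hr => ?_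
  have hr' := Finset.mem_filter.mp hr
  have hrq : r ≠ q := by omega
  rw [Nat.factorization_mul hn hq.ne_zero, Finsupp.add_apply, hq.factorization,
    Finsupp.single_apply, if_neg (Ne.symm hrq), add_zero]

lemma pref_eq_self {n p : ℕ} (hn : n ≠ 0) (hall : ∀ r ∈ n.primeFactors, r < p) :
    pref n p = n := by
  unfold pref
  rw [Finset.filter_true_of_mem hall, ← Nat.support_factorization]
  exact Nat.factorization_prod_pow_eq_self hn

lemma inB_mul_prime_iff {θ : ℕ → ℝ} (hθ : ∀ n : ℕ, 1 ≤ n → (n : ℝ) ≤ θ n)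
    {n q : ℕ} (hq : q.Prime) (hn : 0 < n) (hall : ∀ p ∈ n.primeFactors, p ≤ q) :
    InB θ (n * q) ↔ InB θ n ∧ (q : ℝ) ≤ θ n := by
  have hpf : (n * q).primeFactors = insert q n.primeFactors := by
    rw [Nat.primeFactors_mul hn.ne' hq.ne_zero, hq.primeFactors, Finset.union_comm,
      ← Finset.insert_eq]
  have hOut : ¬ q ∣ n → pref n q = n := by
    intro hdvd
    refine pref_eq_self hn.ne' fun r hr => ?_
    refine lt_of_le_of_ne (hall r hr) fun h => hdvd ?_
    exact h ▸ Nat.dvd_of_mem_primeFactors hr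
  rw [inB_iff, inB_iff]
  constructor
  · rintro ⟨-, h⟩
    have hInBn : ∀ p ∈ n.primeFactors, (p : ℝ) ≤ θ (pref n p) := by
      intro p hp
      have := h p (hpf ▸ Finset.mem_insert_of_mem hp)
      rwa [pref_mul_prime hq hn.ne' (hall p hp)] at this
    refine ⟨⟨hn, hInBn⟩, ?_⟩
    by_cases hdvd : q ∣ n
    · calc (q : ℝ) ≤ n := by exact_mod_cast Nat.le_of_dvd hn hdvd
        _ ≤ θ n := hθ n hn
    · have := h q (hpf ▸ Finset.mem_insert_self q _)
      rwa [pref_mul_prime hq hn.ne' le_rfl, hOut hdvd] at this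
  · rintro ⟨⟨-, hb⟩, hqθ⟩
    refine ⟨Nat.mul_pos hn hq.pos, fun p hp => ?_⟩
    rw [hpf, Finset.mem_insert] at hp
    rcases hp with rfl | hp
    · rw [pref_mul_prime hq hn.ne' le_rfl]
      by_cases hdvd : p ∣ n
      · exact hb p (Nat.mem_primeFactors.mpr ⟨hq, hdvd, hn.ne'⟩)
      · rw [hOut hdvd]; exact hqθ
    · rw [pref_mul_prime hq hn.ne' (hall p hp)]
      exact hb p hp

def Valid (θ : ℕ → ℝ) (x : ℕ × Finset ℕ) : Prop :=
  InB θ x.1 ∧ x.2 ⊆ primesLe (θ x.1)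

def Mx (x : ℕ × Finset ℕ) : ℕ := x.1 * ∏ p ∈ x.2, p

noncomputable def toggle (x : ℕ × Finset ℕ) : ℕ × Finset ℕ :=
  if (Mx x).primeFactors.sup id ∈ x.2 then
    (x.1 * (Mx x).primeFactors.sup id, x.2.erase ((Mx x).primeFactors.sup id))
  else (x.1 / (Mx x).primeFactors.sup id, insert ((Mx x).primeFactors.sup id) x.2)

lemma Mx_pos {θ : ℕ → ℝ} {x : ℕ × Finset ℕ} (hv : Valid θ x) : 0 < Mx x :=
  Nat.mul_pos hv.1.1 (Finset.prod_pos fun p hp => (mem_primesLe.mp (hv.2 hp)).1.pos)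

lemma toggle_spec {θ : ℕ → ℝ} (hθ : ∀ n : ℕ, 1 ≤ n → (n : ℝ) ≤ θ n)
    {x : ℕ × Finset ℕ} (hv : Valid θ x) (hm : Mx x ≠ 1) :
    Valid θ (toggle x) ∧ Mx (toggle x) = Mx x ∧ toggle (toggle x) = x ∧
      ((toggle x).2.card = x.2.card + 1 ∨ x.2.card = (toggle x).2.card + 1) := by
  obtain ⟨n, S⟩ := x
  obtain ⟨hB, hSub⟩ := hv
  have hn : 0 < n := hB.1
  have hSp : ∀ p ∈ S, p.Prime ∧ (p : ℝ) ≤ θ n := fun p hp => mem_primesLe.mp (hSub hp)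
  have hprod : 0 < ∏ p ∈ S, p := Finset.prod_pos fun p hp => (hSp p hp).1.pos
  set m := Mx (n, S) with hmdef
  have hmn : m = n * ∏ p ∈ S, p := rfl
  have hm0 : 0 < m := Nat.mul_pos hn hprod
  have hm1 : 1 < m := lt_of_le_of_ne hm0 (Ne.symm hm)
  have hne : m.primeFactors.Nonempty := Nat.nonempty_primeFactors.mpr hm1
  set q := m.primeFactors.sup id with hqdef
  have hqmem : q ∈ m.primeFactors := by
    obtain ⟨i, hi, h⟩ := Finset.exists_mem_eq_sup _ hne id
    rw [hqdef, h]; exact hi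
  have hq : q.Prime := Nat.prime_of_mem_primeFactors hqmem
  have hqmax : ∀ p ∈ m.primeFactors, p ≤ q := fun p hp => Finset.le_sup (f := id) hp
  have halln : ∀ p ∈ n.primeFactors, p ≤ q := fun p hp =>
    hqmax p (Nat.primeFactors_mono ⟨_, hmn⟩ hm0.ne' hp)
  have hSle : ∀ p ∈ S, p ≤ q := by
    intro p hp
    refine hqmax p (Nat.mem_primeFactors.mpr ⟨(hSp p hp).1, ?_, hm0.ne'⟩)
    exact (Finset.dvd_prod_of_mem id hp).trans ⟨n, by rw [hmn, mul_comm]; rfl⟩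
  by_cases hqS : q ∈ S
  · -- removal branch
    have htog : toggle (n, S) = (n * q, S.erase q) := by
      rw [toggle, if_pos]; exact hqS
    have hMx : Mx (n * q, S.erase q) = m := by
      show n * q * ∏ p ∈ S.erase q, p = m
      rw [mul_assoc, Finset.mul_prod_erase S (fun p => p) hqS, hmn]
    have hvy : Valid θ (n * q, S.erase q) := by
      constructor
      · exact (inB_mul_prime_iff hθ hq hn halln).mpr ⟨hB, (hSp q hqS).2⟩
      · intro p hp
        have hp' := Finset.mem_of_mem_erase hp
        refine mem_primesLe.mpr ⟨(hSp p hp').1, ?_⟩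
        have h1 : p ≤ n * q := (hSle p hp').trans (Nat.le_mul_of_pos_left q hn)
        calc (p : ℝ) ≤ (n * q : ℕ) := by exact_mod_cast h1
          _ ≤ θ (n * q) := by exact_mod_cast hθ _ (Nat.mul_pos hn hq.pos)
    have htog2 : toggle (n * q, S.erase q) = (n, S) := by
      rw [toggle, if_neg]
      · rw [hMx, ← hqdef]
        refine Prod.ext ?_ ?_
        · show (n * q) / q = n
          exact Nat.mul_div_cancel n hq.pos
        · show insert q (S.erase q) = S
          exact Finset.insert_erase hqS
      · rw [hMx, ← hqdef]; exact Finset.notMem_erase q S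
    rw [htog]
    exact ⟨hvy, hMx, htog2, Or.inr (by simp [Finset.card_erase_add_one hqS])⟩
  · -- insertion branch
    have hqdvdm : q ∣ m := Nat.dvd_of_mem_primeFactors hqmem
    have hqnotprod : ¬ q ∣ ∏ p ∈ S, p := by
      intro h
      obtain ⟨p, hp, hqp⟩ := hq.prime.exists_mem_finset_dvd h
      exact hqS (((Nat.prime_dvd_prime_iff_eq hq (hSp p hp).1).mp hqp) ▸ hp)
    have hqdvdn : q ∣ n := by
      rcases (Nat.Prime.dvd_mul hq).mp (hmn ▸ hqdvdm) with h | h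
      · exact h
      · exact absurd h hqnotprod
    set n' := n / q with hn'def
    have hn'q : n' * q = n := Nat.div_mul_cancel hqdvdn
    have hn' : 0 < n' := Nat.div_pos (Nat.le_of_dvd hn hqdvdn) hq.pos
    have halln' : ∀ p ∈ n'.primeFactors, p ≤ q := fun p hp =>
      halln p (Nat.primeFactors_mono (Nat.div_dvd_of_dvd hqdvdn) hn.ne' hp)
    have key := (inB_mul_prime_iff hθ hq hn' halln').mp (by rw [hn'q]; exact hB)
    have htog : toggle (n, S) = (n', insert q S) := by
      rw [toggle, if_neg hqS]
    have hMx : Mx (n', insert q S) = m := by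
      show n' * ∏ p ∈ insert q S, p = m
      rw [Finset.prod_insert hqS, ← mul_assoc, hn'q, hmn]
    have hvy : Valid θ (n', insert q S) := by
      refine ⟨key.1, fun p hp => ?_⟩
      rcases Finset.mem_insert.mp hp with rfl | hp
      · exact mem_primesLe.mpr ⟨hq, key.2⟩
      · refine mem_primesLe.mpr ⟨(hSp p hp).1, ?_⟩
        calc (p : ℝ) ≤ (q : ℕ) := by exact_mod_cast hSle p hp
          _ ≤ θ n' := key.2
    have htog2 : toggle (n', insert q S) = (n, S) := by
      rw [toggle, if_pos]
      · rw [hMx, ← hqdef]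
        refine Prod.ext ?_ ?_
        · show n' * q = n
          exact hn'q
        · show (insert q S).erase q = S
          exact Finset.erase_insert hqS
      · rw [hMx, ← hqdef]; exact Finset.mem_insert_self q S
    rw [htog]
    exact ⟨hvy, hMx, htog2, Or.inl (by simp [Finset.card_insert_of_notMem hqS])⟩

noncomputable def gfun (θ : ℕ → ℝ) (s : ℂ) (x : ℕ × Finset ℕ) : ℂ :=
  if Valid θ x then (-1 : ℂ) ^ x.2.card * ((Mx x : ℕ) : ℂ) ^ (-s) else 0

noncomputable def invo (θ : ℕ → ℝ) (x : ℕ × Finset ℕ) : ℕ × Finset ℕ :=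
  if Valid θ x ∧ Mx x ≠ 1 then toggle x else x

lemma invo_invol {θ : ℕ → ℝ} (hθ : ∀ n : ℕ, 1 ≤ n → (n : ℝ) ≤ θ n) :
    Function.Involutive (invo θ) := by
  intro x
  by_cases h : Valid θ x ∧ Mx x ≠ 1
  · have hx : invo θ x = toggle x := by rw [invo, if_pos h]
    have spec := toggle_spec hθ h.1 h.2
    rw [hx, invo, if_pos ⟨spec.1, by rw [spec.2.1]; exact h.2⟩, spec.2.2.1]
  · have hx : invo θ x = x := by rw [invo, if_neg h]
    rw [hx, hx]

lemma valid_one (θ : ℕ → ℝ) : Valid θ (1, (∅ : Finset ℕ)) := by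
  refine ⟨⟨one_pos, ?_⟩, Finset.empty_subset _⟩
  simp [Nat.primeFactors_one]

lemma Mx_one : Mx (1, (∅ : Finset ℕ)) = 1 := by simp [Mx]

lemma eq_one_of_Mx_eq_one {θ : ℕ → ℝ} {x : ℕ × Finset ℕ} (hv : Valid θ x)
    (hm : Mx x = 1) : x = (1, (∅ : Finset ℕ)) := by
  obtain ⟨n, S⟩ := x
  have hmn : n * ∏ p ∈ S, p = 1 := hm
  have hn1 : n = 1 := Nat.eq_one_of_dvd_one ⟨_, hmn.symm⟩
  have hprod : (∏ p ∈ S, p) = 1 := Nat.eq_one_of_dvd_one ⟨n, by rw [← hmn]; ring⟩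
  have hS : S = ∅ := by
    by_contra h
    obtain ⟨p, hp⟩ := Finset.nonempty_of_ne_empty h
    have hpp : p.Prime := (mem_primesLe.mp (hv.2 hp)).1
    have hdvd : p ∣ 1 := hprod ▸ Finset.dvd_prod_of_mem (fun p => p) hp
    exact absurd (Nat.eq_one_of_dvd_one hdvd) hpp.one_lt.ne'
  rw [hn1, hS]

lemma natCast_mul_cpow (a b : ℕ) (z : ℂ) :
    ((a * b : ℕ) : ℂ) ^ z = (a : ℂ) ^ z * (b : ℂ) ^ z := by
  have h := Complex.mul_cpow_ofReal_nonneg (Nat.cast_nonneg a) (Nat.cast_nonneg b) z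
  push_cast at h ⊢
  exact h

lemma natCast_prod_cpow (S : Finset ℕ) (z : ℂ) :
    ((∏ p ∈ S, p : ℕ) : ℂ) ^ z = ∏ p ∈ S, (p : ℂ) ^ z := by
  classical
  induction S using Finset.induction_on with
  | empty => simp
  | @insert a T ha ih =>
      rw [Finset.prod_insert ha, Finset.prod_insert ha, ← ih, natCast_mul_cpow]

lemma expand_term (θ : ℕ → ℝ) (s : ℂ) (n : ℕ) :
    (if InB θ n then (n : ℂ) ^ (-s) * ∏ p ∈ primesLe (θ n), (1 - (p : ℂ) ^ (-s)) else 0)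
      = ∑ S ∈ (primesLe (θ n)).powerset, gfun θ s (n, S) := by
  by_cases hB : InB θ n
  · rw [if_pos hB]
    have h0 : ∏ p ∈ primesLe (θ n), (1 - (p : ℂ) ^ (-s))
        = ∏ p ∈ primesLe (θ n), (-(p : ℂ) ^ (-s) + 1) :=
      Finset.prod_congr rfl fun p _ => by ring
    rw [h0, Finset.prod_add, Finset.mul_sum]
    refine Finset.sum_congr rfl fun S hS => ?_
    rw [gfun, if_pos ⟨hB, Finset.mem_powerset.mp hS⟩]
    have h1 : ∏ p ∈ S, (-(p : ℂ) ^ (-s)) = (-1 : ℂ) ^ S.card * ∏ p ∈ S, (p : ℂ) ^ (-s) := by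
      rw [← Finset.prod_const (-1 : ℂ), ← Finset.prod_mul_distrib]
      exact Finset.prod_congr rfl fun p _ => by ring
    have h2 : ((Mx (n, S) : ℕ) : ℂ) ^ (-s) = (n : ℂ) ^ (-s) * ∏ p ∈ S, (p : ℂ) ^ (-s) := by
      show ((n * ∏ p ∈ S, p : ℕ) : ℂ) ^ (-s) = _
      rw [natCast_mul_cpow, natCast_prod_cpow]
    rw [h1, h2, Finset.prod_const_one, mul_one]
    ring
  · rw [if_neg hB]
    symm
    exact Finset.sum_eq_zero fun S _ => by rw [gfun, if_neg fun h => hB h.1]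

lemma norm_gfun (θ : ℕ → ℝ) (s : ℂ) (x : ℕ × Finset ℕ) :
    ‖gfun θ s x‖ = if Valid θ x then ((Mx x : ℕ) : ℝ) ^ (-s.re) else 0 := by
  rw [gfun]
  split
  · rename_i h
    have hm : 0 < Mx x := Mx_pos h
    rw [norm_mul, norm_pow, norm_neg, norm_one, one_pow, one_mul]
    rw [show ((Mx x : ℕ) : ℂ) = (((Mx x : ℕ) : ℝ) : ℂ) from by push_cast; rfl]
    rw [Complex.norm_cpow_eq_rpow_re_of_pos (by exact_mod_cast hm),
      Complex.neg_re]
  · simp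

lemma summable_gfun (θ : ℕ → ℝ) {s : ℂ} (hs : 1 < s.re) : Summable (gfun θ s) := by
  classical
  set σ := s.re with hσ
  have hu : Summable (fun n : ℕ => (n : ℝ) ^ (-σ)) :=
    Real.summable_nat_rpow.mpr (by linarith)
  have hunn : ∀ n : ℕ, 0 ≤ (n : ℝ) ^ (-σ) := fun n => Real.rpow_nonneg (Nat.cast_nonneg n) _
  have hU : Summable (fun y : ℕ × ℕ => (y.1 : ℝ) ^ (-σ) * (y.2 : ℝ) ^ (-σ)) :=
    hu.mul_of_nonneg hu hunn hunn
  set H : ℕ × Finset ℕ → ℝ := fun x => if Valid θ x then ((Mx x : ℕ) : ℝ) ^ (-σ) else 0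
    with hHdef
  have hHnn : ∀ x, 0 ≤ H x := by
    intro x; rw [hHdef]; dsimp only; split
    · exact Real.rpow_nonneg (Nat.cast_nonneg _) _
    · exact le_rfl
  have hHsum : Summable H := by
    refine summable_of_sum_le (c := ∑' y : ℕ × ℕ, (y.1 : ℝ) ^ (-σ) * (y.2 : ℝ) ^ (-σ)) hHnn fun F => ?_
    set e : ℕ × Finset ℕ → ℕ × ℕ := fun x => (x.1, ∏ p ∈ x.2, p) with hedef
    calc ∑ x ∈ F, H x = ∑ x ∈ F.filter (fun x => Valid θ x), H x := by
          rw [Finset.sum_filter_of_ne]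
          intro x _ hx
          by_contra hv
          exact hx (by rw [hHdef]; exact if_neg hv)
      _ = ∑ x ∈ F.filter (fun x => Valid θ x),
            ((e x).1 : ℝ) ^ (-σ) * ((e x).2 : ℝ) ^ (-σ) := by
          refine Finset.sum_congr rfl fun x hx => ?_
          have hv : Valid θ x := (Finset.mem_filter.mp hx).2
          rw [hHdef]; dsimp only
          rw [if_pos hv]
          show ((Mx x : ℕ) : ℝ) ^ (-σ) = (x.1 : ℝ) ^ (-σ) * ((∏ p ∈ x.2, p : ℕ) : ℝ) ^ (-σ)
          rw [show ((Mx x : ℕ) : ℝ) = (x.1 : ℝ) * ((∏ p ∈ x.2, p : ℕ) : ℝ) from by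
            rw [Mx]; push_cast; ring]
          exact Real.mul_rpow (Nat.cast_nonneg _) (Nat.cast_nonneg _)
      _ = ∑ y ∈ (F.filter (fun x => Valid θ x)).image e,
            (y.1 : ℝ) ^ (-σ) * (y.2 : ℝ) ^ (-σ) := by
          refine (Finset.sum_image (g := e)
            (f := fun y : ℕ × ℕ => (y.1 : ℝ) ^ (-σ) * (y.2 : ℝ) ^ (-σ)) ?_).symm
          intro x hx y hy hxy
          have hvx : Valid θ x := (Finset.mem_filter.mp hx).2
          have hvy : Valid θ y := (Finset.mem_filter.mp hy).2
          have hxy' : (x.1, ∏ p ∈ x.2, p) = (y.1, ∏ p ∈ y.2, p) := hxy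
          have h1 : x.1 = y.1 := (Prod.ext_iff.mp hxy').1
          have h2 : (∏ p ∈ x.2, p) = ∏ p ∈ y.2, p := (Prod.ext_iff.mp hxy').2
          have hx2 : x.2 = y.2 := by
            have hxp : ∀ p ∈ x.2, p.Prime := fun p hp => (mem_primesLe.mp (hvx.2 hp)).1
            have hyp : ∀ p ∈ y.2, p.Prime := fun p hp => (mem_primesLe.mp (hvy.2 hp)).1
            rw [← Nat.primeFactors_prod hxp, ← Nat.primeFactors_prod hyp, h2]
          exact Prod.ext h1 hx2
      _ ≤ ∑' y : ℕ × ℕ, (y.1 : ℝ) ^ (-σ) * (y.2 : ℝ) ^ (-σ) :=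
          Summable.sum_le_tsum _ (fun y _ => mul_nonneg (hunn _) (hunn _)) hU
  refine Summable.of_norm ?_
  refine hHsum.congr fun x => ?_
  rw [norm_gfun, hHdef]

theorem dirichlet_identity_B (θ : ℕ → ℝ) (hθ1 : 2 ≤ θ 1)
    (hθ : ∀ n : ℕ, 1 ≤ n → (n : ℝ) ≤ θ n) (s : ℂ) (hs : 1 < s.re) :
    (1 : ℂ) = ∑' n : ℕ,
      if InB θ n then (n : ℂ) ^ (-s) * ∏ p ∈ primesLe (θ n), (1 - (p : ℂ) ^ (-s))
      else 0 := by
  classical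
  have hsum : Summable (gfun θ s) := summable_gfun θ hs
  have hsum' : ∀ n : ℕ, Summable fun S : Finset ℕ => gfun θ s (n, S) := by
    intro n
    refine summable_of_ne_finset_zero (s := (primesLe (θ n)).powerset) fun S hS => ?_
    rw [gfun, if_neg]
    exact fun h => hS (Finset.mem_powerset.mpr h.2)
  have step1 : (∑' n : ℕ,
      if InB θ n then (n : ℂ) ^ (-s) * ∏ p ∈ primesLe (θ n), (1 - (p : ℂ) ^ (-s)) else 0)
      = ∑' x : ℕ × Finset ℕ, gfun θ s x := by
    rw [tsum_congr (expand_term θ s)]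
    rw [Summable.tsum_prod' hsum hsum']
    refine tsum_congr fun n => ?_
    refine (tsum_eq_sum fun S hS => ?_).symm
    rw [gfun, if_neg]
    exact fun h => hS (Finset.mem_powerset.mpr h.2)
  have hg1 : gfun θ s (1, (∅ : Finset ℕ)) = 1 := by
    rw [gfun, if_pos (valid_one θ), Mx_one]
    simp
  have step2 : (∑' x : ℕ × Finset ℕ, gfun θ s x) = 1 := by
    rw [Summable.tsum_eq_add_tsum_ite hsum (1, (∅ : Finset ℕ)), hg1]
    have htail : (∑' x : ℕ × Finset ℕ,
        if x = (1, (∅ : Finset ℕ)) then 0 else gfun θ s x) = 0 := by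
      set g' : ℕ × Finset ℕ → ℂ :=
        fun x => if x = (1, (∅ : Finset ℕ)) then 0 else gfun θ s x with hg'def
      have hneg : ∀ x, g' (invo θ x) = -g' x := by
        intro x
        by_cases hgood : Valid θ x ∧ Mx x ≠ 1
        · have spec := toggle_spec hθ hgood.1 hgood.2
          have hxne : x ≠ (1, (∅ : Finset ℕ)) := fun h => hgood.2 (by rw [h, Mx_one])
          have hyne : toggle x ≠ (1, (∅ : Finset ℕ)) := fun h =>
            hgood.2 (by rw [← spec.2.1, h, Mx_one])
          rw [hg'def]; dsimp only
          rw [invo, if_pos hgood, if_neg hyne, if_neg hxne]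
          rw [gfun, gfun, if_pos spec.1, if_pos hgood.1, spec.2.1]
          rcases spec.2.2.2 with hc | hc
          · rw [hc, pow_succ]; ring
          · rw [hc, pow_succ]; ring
        · rw [invo, if_neg hgood]
          have hz : g' x = 0 := by
            rw [hg'def]; dsimp only
            by_cases hv : Valid θ x
            · have hm : Mx x = 1 := not_ne_iff.mp (fun hm' => hgood ⟨hv, hm'⟩)
              rw [if_pos (eq_one_of_Mx_eq_one hv hm)]
            · split
              · rfl
              · rw [gfun, if_neg hv]
          rw [hz, neg_zero]
      have h1 : (∑' x, g' (invo θ x)) = ∑' x, g' x := by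
        have h := Equiv.tsum_eq (Function.Involutive.toPerm _ (invo_invol hθ)) g'
        simpa [Function.Involutive.coe_toPerm] using h
      have h2 : (∑' x, g' x) = -∑' x, g' x := by
        nth_rewrite 1 [← h1]
        rw [tsum_congr hneg, tsum_neg]
      have h3 : (∑' x, g' x) + ∑' x, g' x = 0 := by
        nth_rewrite 2 [h2]
        ring
      exact add_self_eq_zero.mp h3
    rw [htail, add_zero]
  rw [step1, step2]
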